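/- Special case g = 1 of the rational Fay identity: for complex numbers P, P', A, B, C, D (pairwise distinct where needed) and any f ∈ ℂ, setting σ(A,B) = (P'−A)(P−B)/((P'−B)(P−A)), one has (1−f)·(1−f·σ(A,B)σ(C,D)) = [A,B;D,C]·(1−f·σ(A,B))·(1−f·σ(C,D)) + [A,D;B,C]·(1−f·σ(A,D))·(1−f·σ(C,B)), where [A,B;C,D] = (A−C)(B−D)/((A−D)(B−C)). -/

import Mathlib

/-- The cross-ratio `[A,B;C,D] = (A-C)(B-D)/((A-D)(B-C))`. -/
noncomputable def crossRatio (A B C D : ℂ) : ℂ :=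
  (A - C) * (B - D) / ((A - D) * (B - C))

/-- `σ(A,B) = (P'-A)(P-B)/((P'-B)(P-A))`. -/
noncomputable def sigmaFn (P P' A B : ℂ) : ℂ :=
  (P' - A) * (P - B) / ((P' - B) * (P - A))


lemma fay_key (x y u v r s f : ℂ) (huv : u * v = x * y) (hrs : r + s = 1)
    (hsum : r * x + r * y + s * u + s * v = 1 + x * y) :
    (1 - f) * (1 - f * x * y) = r * (1 - f * x) * (1 - f * y) + s * (1 - f * u) * (1 - f * v) := by
  linear_combination (-1 - f ^ 2 * x * y) * hrs + f * hsum - f ^ 2 * s * huv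

set_option maxHeartbeats 4000000 in
lemma fay_div (NX NY NU NV R S E Q M f : ℂ) (hQ : Q ≠ 0) (hE : E ≠ 0)
    (hxy : NX * NY = Q * M) (huv : NU * NV = Q * M) (hRS : R + S = E)
    (hsum : R * NX + R * NY + S * NU + S * NV = E * Q + E * M) :
    (1 - f) * (1 - f * (NX / Q) * (NY / Q)) =
      R / E * (1 - f * (NX / Q)) * (1 - f * (NY / Q)) +
        S / E * (1 - f * (NU / Q)) * (1 - f * (NV / Q)) := by
  have key : E * ((1 - f) * (Q ^ 2 - f * (NX * NY))) =
      R * ((Q - f * NX) * (Q - f * NY)) + S * ((Q - f * NU) * (Q - f * NV)) := by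
    linear_combination (f ^ 2 * E - f * E - f ^ 2 * R) * hxy - f ^ 2 * S * huv +
      (-(f ^ 2 * Q * M) - Q ^ 2) * hRS + f * Q * hsum
  calc (1 - f) * (1 - f * (NX / Q) * (NY / Q))
      = E * ((1 - f) * (Q ^ 2 - f * (NX * NY))) / (E * Q ^ 2) := by
        field_simp
    _ = (R * ((Q - f * NX) * (Q - f * NY)) + S * ((Q - f * NU) * (Q - f * NV))) / (E * Q ^ 2) := by
        rw [key]
    _ = R / E * (1 - f * (NX / Q)) * (1 - f * (NY / Q)) +
        S / E * (1 - f * (NU / Q)) * (1 - f * (NV / Q)) := by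
        field_simp

set_option maxHeartbeats 1000000 in
/-- The genus-one (`g = 1`) case of the rational Fay identity. -/
theorem rational_fay_g1 (P P' A B C D : ℂ)
    (hPA : P ≠ A) (hPB : P ≠ B) (hPC : P ≠ C) (hPD : P ≠ D)
    (hP'A : P' ≠ A) (hP'B : P' ≠ B) (hP'C : P' ≠ C) (hP'D : P' ≠ D)
    (hAB : A ≠ B) (hAC : A ≠ C) (hAD : A ≠ D)
    (hBC : B ≠ C) (hBD : B ≠ D) (hCD : C ≠ D)
    (f : ℂ) :
    (1 - f) * (1 - f * sigmaFn P P' A B * sigmaFn P P' C D) =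
      crossRatio A B D C * (1 - f * sigmaFn P P' A B) * (1 - f * sigmaFn P P' C D) +
        crossRatio A D B C * (1 - f * sigmaFn P P' A D) * (1 - f * sigmaFn P P' C B) := by
  have h1 : P - A ≠ 0 := sub_ne_zero.mpr hPA
  have h2 : P - B ≠ 0 := sub_ne_zero.mpr hPB
  have h3 : P - C ≠ 0 := sub_ne_zero.mpr hPC
  have h4 : P - D ≠ 0 := sub_ne_zero.mpr hPD
  have h5 : P' - A ≠ 0 := sub_ne_zero.mpr hP'A
  have h6 : P' - B ≠ 0 := sub_ne_zero.mpr hP'B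
  have h7 : P' - C ≠ 0 := sub_ne_zero.mpr hP'C
  have h8 : P' - D ≠ 0 := sub_ne_zero.mpr hP'D
  have h10 : A - C ≠ 0 := sub_ne_zero.mpr hAC
  have h13 : B - D ≠ 0 := sub_ne_zero.mpr hBD
  have hQ : (P' - B) * (P' - D) * (P - A) * (P - C) ≠ 0 :=
    mul_ne_zero (mul_ne_zero (mul_ne_zero h6 h8) h1) h3
  have hE : (A - C) * (B - D) ≠ 0 := mul_ne_zero h10 h13
  have ex : sigmaFn P P' A B =
      (P' - A) * (P - B) * (P' - D) * (P - C) / ((P' - B) * (P' - D) * (P - A) * (P - C)) := by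
    unfold sigmaFn; rw [div_eq_div_iff (mul_ne_zero h6 h1) hQ]; ring
  have ey : sigmaFn P P' C D =
      (P' - C) * (P - D) * (P' - B) * (P - A) / ((P' - B) * (P' - D) * (P - A) * (P - C)) := by
    unfold sigmaFn; rw [div_eq_div_iff (mul_ne_zero h8 h3) hQ]; ring
  have eu : sigmaFn P P' A D =
      (P' - A) * (P - D) * (P' - B) * (P - C) / ((P' - B) * (P' - D) * (P - A) * (P - C)) := by
    unfold sigmaFn; rw [div_eq_div_iff (mul_ne_zero h8 h1) hQ]; ring
  have ev : sigmaFn P P' C B =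
      (P' - C) * (P - B) * (P' - D) * (P - A) / ((P' - B) * (P' - D) * (P - A) * (P - C)) := by
    unfold sigmaFn; rw [div_eq_div_iff (mul_ne_zero h6 h3) hQ]; ring
  have er : crossRatio A B D C = (A - D) * (B - C) / ((A - C) * (B - D)) := rfl
  have es : crossRatio A D B C = -((A - B) * (D - C)) / ((A - C) * (B - D)) := by
    unfold crossRatio
    rw [div_eq_div_iff (mul_ne_zero h10 (sub_ne_zero.mpr hBD.symm)) hE]; ring
  rw [ex, ey, eu, ev, er, es]
  exact fay_div _ _ _ _ _ _ _ _
    ((P' - A) * (P - B) * ((P' - C) * (P - D))) f hQ hE (by ring) (by ring) (by ring) (by ring)
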